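/- arXiv:1003.3895 — 2 statements merged into one kernel-verified Lean document; each statement's English description precedes it below -/
import Mathlib

section
/- Weak lower semicontinuity of the state-dependent quadratic control cost: Let 𝒦 : ℝ^{2m} → M_m(ℝ) be a continuous map taking values in symmetric positive semidefinite matrices. Let (qⁿ) be a sequence in C([0,T], ℝ^{2m}) converging uniformly to q^∞, and let (uⁿ) be a sequence in L²([0,T], ℝ^m) converging weakly to u^∞. Then ∫₀^T ⟨𝒦_{q^∞_s} u^∞_s, u^∞_s⟩ ds ≤ liminf_{n→∞} ∫₀^T ⟨𝒦_{qⁿ_s} uⁿ_s, uⁿ_s⟩ ds. -/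
open MeasureTheory Filter Set
open scoped RealInnerProductSpace Topology

noncomputable section

set_option maxHeartbeats 1000000 in
/-- weak lower semicontinuity of the state-dependent quadratic
control cost along uniformly convergent states and weakly convergent controls. -/
theorem stmt6 (m : ℕ) (hm : 1 ≤ m) (T : ℝ) (hT : 0 < T)
    (𝒦 : EuclideanSpace ℝ (Fin (2 * m)) →
      (EuclideanSpace ℝ (Fin m) →L[ℝ] EuclideanSpace ℝ (Fin m)))
    (h𝒦cont : Continuous 𝒦)
    (h𝒦symm : ∀ q u v, ⟪𝒦 q u, v⟫ = ⟪u, 𝒦 q v⟫)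
    (h𝒦pos : ∀ q u, 0 ≤ ⟪𝒦 q u, u⟫)
    (qseq : ℕ → ℝ → EuclideanSpace ℝ (Fin (2 * m)))
    (qlim : ℝ → EuclideanSpace ℝ (Fin (2 * m)))
    (hqcont : ∀ k, ContinuousOn (qseq k) (Set.Icc 0 T))
    (hqlimcont : ContinuousOn qlim (Set.Icc 0 T))
    (hqconv : TendstoUniformlyOn qseq qlim atTop (Set.Icc 0 T))
    (useq : ℕ → ℝ → EuclideanSpace ℝ (Fin m))
    (ulim : ℝ → EuclideanSpace ℝ (Fin m))
    (huseq : ∀ k, MemLp (useq k) 2 (volume.restrict (Set.Icc 0 T)))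
    (hulim : MemLp ulim 2 (volume.restrict (Set.Icc 0 T)))
    (huconv : ∀ φ : ℝ → EuclideanSpace ℝ (Fin m),
      MemLp φ 2 (volume.restrict (Set.Icc 0 T)) →
      Tendsto (fun k => ∫ s in Set.Icc (0:ℝ) T, ⟪useq k s, φ s⟫) atTop
        (𝓝 (∫ s in Set.Icc (0:ℝ) T, ⟪ulim s, φ s⟫))) :
    (∫ s in Set.Icc (0:ℝ) T, ⟪𝒦 (qlim s) (ulim s), ulim s⟫) ≤
      Filter.liminf (fun k => ∫ s in Set.Icc (0:ℝ) T, ⟪𝒦 (qseq k s) (useq k s), useq k s⟫)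
        atTop := by
  set μ : Measure ℝ := volume.restrict (Set.Icc (0:ℝ) T) with hμdef
  have hIccMeas : MeasurableSet (Set.Icc (0:ℝ) T) := measurableSet_Icc
  have h0T : (0:ℝ) ∈ Set.Icc (0:ℝ) T := ⟨le_refl _, hT.le⟩
  -- compact set S containing the limit trajectory and eventually the approximations
  set K0 : Set (EuclideanSpace ℝ (Fin (2 * m))) := qlim '' Set.Icc 0 T with hK0def
  have hK0 : IsCompact K0 := isCompact_Icc.image_of_continuousOn hqlimcont
  set S : Set (EuclideanSpace ℝ (Fin (2 * m))) := Metric.cthickening 1 K0 with hSdef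
  have hScompact : IsCompact S := hK0.cthickening
  have hK0S : K0 ⊆ S := Metric.self_subset_cthickening _
  have hqlimS : ∀ s ∈ Set.Icc (0:ℝ) T, qlim s ∈ S := fun s hs =>
    hK0S (Set.mem_image_of_mem _ hs)
  obtain ⟨B, hB⟩ := hScompact.exists_bound_of_continuousOn h𝒦cont.continuousOn
  have hB0 : 0 ≤ B := le_trans (norm_nonneg _) (hB _ (hqlimS 0 h0T))
  -- measurability of the limit matrix field
  have hAmeas : AEStronglyMeasurable (fun s => 𝒦 (qlim s)) μ :=
    (h𝒦cont.comp_continuousOn hqlimcont).aestronglyMeasurable hIccMeas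
  -- applying a bounded measurable operator field preserves L²
  have happly : ∀ (A : ℝ → EuclideanSpace ℝ (Fin m) →L[ℝ] EuclideanSpace ℝ (Fin m)) (v : ℝ → EuclideanSpace ℝ (Fin m)), AEStronglyMeasurable A μ →
      (∀ᵐ s ∂μ, ‖A s‖ ≤ B) → MemLp v 2 μ → MemLp (fun s => A s (v s)) 2 μ := by
    intro A v hA hAbd hv
    refine MemLp.of_le_mul (c := B) hv ?_ ?_
    · exact isBoundedBilinearMap_apply.continuous.comp_aestronglyMeasurable
        (hA.prodMk hv.aestronglyMeasurable)
    · filter_upwards [hAbd] with s hs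
      calc ‖A s (v s)‖ ≤ ‖A s‖ * ‖v s‖ := (A s).le_opNorm _
        _ ≤ B * ‖v s‖ := by
          exact mul_le_mul_of_nonneg_right hs (norm_nonneg _)
  have hAbd : ∀ᵐ s ∂μ, ‖(fun s => 𝒦 (qlim s)) s‖ ≤ B := by
    filter_upwards [ae_restrict_mem hIccMeas] with s hs
    exact hB _ (hqlimS s hs)
  -- inner products of L² functions are integrable
  have integ_inner : ∀ (v w : ℝ → EuclideanSpace ℝ (Fin m)), MemLp v 2 μ → MemLp w 2 μ →
      Integrable (fun s => ⟪v s, w s⟫) μ := by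
    intro v w hv hw
    refine (L2.integrable_inner (𝕜 := ℝ) (hv.toLp v) (hw.toLp w)).congr ?_
    filter_upwards [hv.coeFn_toLp, hw.coeFn_toLp] with s h1 h2
    rw [h1, h2]
  -- Banach–Steinhaus: L² norms of the controls are bounded
  have hUbd : ∃ C, 0 ≤ C ∧ ∀ k, ‖(huseq k).toLp (useq k)‖ ≤ C := by
    have hpt : ∀ φ : Lp (EuclideanSpace ℝ (Fin m)) 2 μ, ∃ C, ∀ k,
        ‖(innerSL ℝ ((huseq k).toLp (useq k))) φ‖ ≤ C := by
      intro φ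
      have hφ : MemLp (fun s => φ s) 2 μ := Lp.memLp φ
      have ht := (huconv _ hφ).norm
      obtain ⟨C, hC⟩ := ht.bddAbove_range
      refine ⟨C, fun k => ?_⟩
      have heq : (innerSL ℝ ((huseq k).toLp (useq k))) φ
          = ∫ s in Set.Icc (0:ℝ) T, ⟪useq k s, φ s⟫ := by
        rw [innerSL_apply_apply, L2.inner_def]
        refine integral_congr_ae ?_
        filter_upwards [(huseq k).coeFn_toLp] with s h1
        rw [h1]
      rw [heq]
      exact hC (Set.mem_range_self k)
    obtain ⟨C, hC⟩ := banach_steinhaus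
        (g := fun k => innerSL ℝ ((huseq k).toLp (useq k))) hpt
    refine ⟨max C 0, le_max_right _ _, fun k => ?_⟩
    have := hC k
    rw [innerSL_apply_norm] at this
    exact this.trans (le_max_left _ _)
  obtain ⟨C, hC0, hC⟩ := hUbd
  -- the pointwise squared norm has integral at most C²
  have husq : ∀ k, Integrable (fun s => ‖useq k s‖ ^ 2) μ := by
    intro k
    refine (integ_inner _ _ (huseq k) (huseq k)).congr ?_
    exact Filter.Eventually.of_forall fun s => real_inner_self_eq_norm_sq _
  have husqC : ∀ k, ∫ s, ‖useq k s‖ ^ 2 ∂μ ≤ C ^ 2 := by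
    intro k
    have h1 : ∫ s, ‖useq k s‖ ^ 2 ∂μ
        = ⟪(huseq k).toLp (useq k), (huseq k).toLp (useq k)⟫ := by
      rw [L2.inner_def]
      refine integral_congr_ae ?_
      filter_upwards [(huseq k).coeFn_toLp] with s h1
      rw [h1, real_inner_self_eq_norm_sq]
    rw [h1, real_inner_self_eq_norm_sq]
    exact pow_le_pow_left₀ (norm_nonneg _) (hC k) 2
  -- the fixed test function phiI = 𝒦(qlim) ulim
  set phiI : ℝ → EuclideanSpace ℝ (Fin m) := fun s => 𝒦 (qlim s) (ulim s) with hphiIdef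
  have hphiI : MemLp phiI 2 μ := happly _ _ hAmeas hAbd hulim
  set cI : ℝ := ∫ s in Set.Icc (0:ℝ) T, ⟪𝒦 (qlim s) (ulim s), ulim s⟫ with hcIdef
  set L : ℕ → ℝ := fun k => ∫ s in Set.Icc (0:ℝ) T, ⟪useq k s, phiI s⟫ with hLdef
  have hLconv : Tendsto L atTop (𝓝 cI) := by
    have := huconv phiI hphiI
    have heq : (∫ s in Set.Icc (0:ℝ) T, ⟪ulim s, phiI s⟫) = cI := by
      rw [hcIdef]
      exact integral_congr_ae (Filter.Eventually.of_forall fun s => real_inner_comm _ _)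
    rwa [heq] at this
  set I : ℕ → ℝ := fun k => ∫ s in Set.Icc (0:ℝ) T, ⟪𝒦 (qseq k s) (useq k s), useq k s⟫
    with hIdef
  set J : ℕ → ℝ := fun k => ∫ s in Set.Icc (0:ℝ) T, ⟪𝒦 (qlim s) (useq k s), useq k s⟫
    with hJdef
  -- integrability of all relevant integrands
  have hJint : ∀ k, Integrable (fun s => ⟪𝒦 (qlim s) (useq k s), useq k s⟫) μ :=
    fun k => integ_inner _ _ (happly _ _ hAmeas hAbd (huseq k)) (huseq k)
  have hLint : ∀ k, Integrable (fun s => ⟪useq k s, phiI s⟫) μ :=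
    fun k => integ_inner _ _ (huseq k) hphiI
  have hcint : Integrable (fun s => ⟪phiI s, ulim s⟫) μ := integ_inner _ _ hphiI hulim
  -- step 1: pointwise convexity inequality and its integrated form
  have hstep1 : ∀ k, 2 * L k - cI ≤ J k := by
    intro k
    have hpt : ∀ s, 2 * ⟪useq k s, phiI s⟫ - ⟪phiI s, ulim s⟫
        ≤ ⟪𝒦 (qlim s) (useq k s), useq k s⟫ := by
      intro s
      have h0 := h𝒦pos (qlim s) (useq k s - ulim s)
      have h1 : ⟪𝒦 (qlim s) (useq k s), ulim s⟫ = ⟪useq k s, phiI s⟫ :=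
        h𝒦symm (qlim s) (useq k s) (ulim s)
      have h2 : ⟪phiI s, useq k s⟫ = ⟪useq k s, phiI s⟫ := real_inner_comm _ _
      rw [map_sub, inner_sub_left, inner_sub_right, inner_sub_right] at h0
      rw [hphiIdef] at h1 h2 ⊢
      simp only at h0 h1 h2 ⊢
      linarith
    have hint : Integrable (fun s => 2 * ⟪useq k s, phiI s⟫ - ⟪phiI s, ulim s⟫) μ :=
      ((hLint k).const_mul 2).sub hcint
    have hmono := integral_mono hint (hJint k) hpt
    have heq : ∫ s, (2 * ⟪useq k s, phiI s⟫ - ⟪phiI s, ulim s⟫) ∂μ = 2 * L k - cI := by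
      rw [integral_sub ((hLint k).const_mul 2) hcint, integral_const_mul]
    rw [heq] at hmono
    exact hmono
  -- eventual control of matrices along the approximating trajectories
  have hS_event : ∀ ε > 0, ∀ᶠ k in atTop, ∀ s ∈ Set.Icc (0:ℝ) T,
      qseq k s ∈ S ∧ ‖𝒦 (qseq k s) - 𝒦 (qlim s)‖ < ε := by
    intro ε hε
    have hUC := hScompact.uniformContinuousOn_of_continuous h𝒦cont.continuousOn
    rw [Metric.uniformContinuousOn_iff] at hUC
    obtain ⟨δ, hδ, hδ'⟩ := hUC ε hε
    have hqc := Metric.tendstoUniformlyOn_iff.1 hqconv (min δ 1) (lt_min hδ one_pos)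
    filter_upwards [hqc] with k hk s hs
    have hd := hk s hs
    have hmem : qseq k s ∈ S := by
      refine Metric.mem_cthickening_of_dist_le _ (qlim s) 1 _
        (Set.mem_image_of_mem _ hs) ?_
      rw [dist_comm]
      exact le_trans (hd.le) (min_le_right _ _)
    refine ⟨hmem, ?_⟩
    have := hδ' (qseq k s) hmem (qlim s) (hqlimS s hs)
      (by rw [dist_comm]; exact lt_of_lt_of_le hd (min_le_left _ _))
    rwa [dist_eq_norm] at this
  -- step 2 : eventually I k ≥ J k - ε
  have hstep2 : ∀ ε > 0, ∀ᶠ k in atTop, J k - ε ≤ I k := by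
    intro ε hε
    set ε' : ℝ := ε / (C ^ 2 + 1) with hε'def
    have hε' : 0 < ε' := div_pos hε (by positivity)
    filter_upwards [hS_event ε' hε'] with k hk
    -- integrability of the k-th integrand
    have hAk : AEStronglyMeasurable (fun s => 𝒦 (qseq k s)) μ :=
      (h𝒦cont.comp_continuousOn (hqcont k)).aestronglyMeasurable hIccMeas
    have hAkbd : ∀ᵐ s ∂μ, ‖(fun s => 𝒦 (qseq k s)) s‖ ≤ B := by
      filter_upwards [ae_restrict_mem hIccMeas] with s hs
      exact hB _ (hk s hs).1
    have hIint : Integrable (fun s => ⟪𝒦 (qseq k s) (useq k s), useq k s⟫) μ :=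
      integ_inner _ _ (happly _ _ hAk hAkbd (huseq k)) (huseq k)
    -- pointwise comparison
    have hpt : ∀ᵐ s ∂μ, ⟪𝒦 (qlim s) (useq k s), useq k s⟫ - ε' * ‖useq k s‖ ^ 2
        ≤ ⟪𝒦 (qseq k s) (useq k s), useq k s⟫ := by
      filter_upwards [ae_restrict_mem hIccMeas] with s hs
      have hdiff : |⟪𝒦 (qseq k s) (useq k s), useq k s⟫
          - ⟪𝒦 (qlim s) (useq k s), useq k s⟫| ≤ ε' * ‖useq k s‖ ^ 2 := by
        have heq : ⟪𝒦 (qseq k s) (useq k s), useq k s⟫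
            - ⟪𝒦 (qlim s) (useq k s), useq k s⟫
            = ⟪(𝒦 (qseq k s) - 𝒦 (qlim s)) (useq k s), useq k s⟫ := by
          rw [ContinuousLinearMap.sub_apply, inner_sub_left]
        rw [heq]
        calc |⟪(𝒦 (qseq k s) - 𝒦 (qlim s)) (useq k s), useq k s⟫|
            ≤ ‖(𝒦 (qseq k s) - 𝒦 (qlim s)) (useq k s)‖ * ‖useq k s‖ :=
              abs_real_inner_le_norm _ _
          _ ≤ (‖𝒦 (qseq k s) - 𝒦 (qlim s)‖ * ‖useq k s‖) * ‖useq k s‖ :=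
              mul_le_mul_of_nonneg_right ((𝒦 (qseq k s) - 𝒦 (qlim s)).le_opNorm _)
                (norm_nonneg _)
          _ ≤ (ε' * ‖useq k s‖) * ‖useq k s‖ := by
              refine mul_le_mul_of_nonneg_right
                (mul_le_mul_of_nonneg_right (hk s hs).2.le (norm_nonneg _))
                (norm_nonneg _)
          _ = ε' * ‖useq k s‖ ^ 2 := by ring
      have := (abs_le.1 hdiff).1
      linarith
    have hmono := integral_mono_ae
      (f := fun s => ⟪𝒦 (qlim s) (useq k s), useq k s⟫ - ε' * ‖useq k s‖ ^ 2)
      (g := fun s => ⟪𝒦 (qseq k s) (useq k s), useq k s⟫)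
      ((hJint k).sub ((husq k).const_mul ε')) hIint hpt
    have heq : ∫ s, (⟪𝒦 (qlim s) (useq k s), useq k s⟫ - ε' * ‖useq k s‖ ^ 2) ∂μ
        = J k - ε' * ∫ s, ‖useq k s‖ ^ 2 ∂μ := by
      rw [integral_sub (hJint k) ((husq k).const_mul ε'), integral_const_mul]
    rw [heq] at hmono
    have hfin : J k - ε ≤ J k - ε' * ∫ s, ‖useq k s‖ ^ 2 ∂μ := by
      have h1 : ε' * ∫ s, ‖useq k s‖ ^ 2 ∂μ ≤ ε' * C ^ 2 :=
        mul_le_mul_of_nonneg_left (husqC k) hε'.le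
      have h2 : ε' * C ^ 2 ≤ ε := by
        rw [hε'def, div_mul_eq_mul_div, div_le_iff₀ (by positivity)]
        nlinarith
      linarith
    exact hfin.trans hmono
  -- I is eventually bounded above, hence coboundedness for the liminf
  have hIbdd : IsBoundedUnder (· ≤ ·) atTop I := by
    refine isBoundedUnder_of_eventually_le (a := B * C ^ 2) ?_
    filter_upwards [hS_event 1 one_pos] with k hk
    have hpt : ∀ᵐ s ∂μ, ⟪𝒦 (qseq k s) (useq k s), useq k s⟫ ≤ B * ‖useq k s‖ ^ 2 := by
      filter_upwards [ae_restrict_mem hIccMeas] with s hs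
      calc ⟪𝒦 (qseq k s) (useq k s), useq k s⟫
          ≤ |⟪𝒦 (qseq k s) (useq k s), useq k s⟫| := le_abs_self _
        _ ≤ ‖𝒦 (qseq k s) (useq k s)‖ * ‖useq k s‖ := abs_real_inner_le_norm _ _
        _ ≤ (‖𝒦 (qseq k s)‖ * ‖useq k s‖) * ‖useq k s‖ :=
            mul_le_mul_of_nonneg_right ((𝒦 (qseq k s)).le_opNorm _) (norm_nonneg _)
        _ ≤ (B * ‖useq k s‖) * ‖useq k s‖ :=
            mul_le_mul_of_nonneg_right
              (mul_le_mul_of_nonneg_right (hB _ (hk s hs).1) (norm_nonneg _))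
              (norm_nonneg _)
        _ = B * ‖useq k s‖ ^ 2 := by ring
    have hAk : AEStronglyMeasurable (fun s => 𝒦 (qseq k s)) μ :=
      (h𝒦cont.comp_continuousOn (hqcont k)).aestronglyMeasurable hIccMeas
    have hAkbd : ∀ᵐ s ∂μ, ‖(fun s => 𝒦 (qseq k s)) s‖ ≤ B := by
      filter_upwards [ae_restrict_mem hIccMeas] with s hs
      exact hB _ (hk s hs).1
    have hIint : Integrable (fun s => ⟪𝒦 (qseq k s) (useq k s), useq k s⟫) μ :=
      integ_inner _ _ (happly _ _ hAk hAkbd (huseq k)) (huseq k)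
    have hmono := integral_mono_ae hIint ((husq k).const_mul B) hpt
    have h2 : ∫ s, B * ‖useq k s‖ ^ 2 ∂μ ≤ B * C ^ 2 := by
      rw [integral_const_mul]
      exact mul_le_mul_of_nonneg_left (husqC k) hB0
    exact le_trans hmono h2
  have hIcobdd : IsCoboundedUnder (· ≥ ·) atTop I := hIbdd.isCoboundedUnder_ge
  -- conclusion
  refine le_of_forall_sub_le fun ε hε => ?_
  refine le_liminf_of_le hIcobdd ?_
  have hL : ∀ᶠ k in atTop, cI - ε / 2 ≤ 2 * L k - cI := by
    have := hLconv.eventually (eventually_ge_nhds (show cI - ε / 4 < cI by linarith))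
    filter_upwards [this] with k hk
    linarith
  filter_upwards [hL, hstep2 (ε / 2) (by linarith)] with k h1 h2
  have := hstep1 k
  linarith

end
end

section
/- Differentiability of the kernel feature map (appendix lemma): Let W be a real Hilbert space, K_W : ℝ^d × ℝ^d → ℝ a function of class C², and Φ : ℝ^d → W a map satisfying ⟨Φ(z_1), Φ(z_2)⟩_W = K_W(z_1,z_2) for all z_1, z_2 ∈ ℝ^d. Then Φ is differentiable at every point of ℝ^d, and its differential satisfies, for all z_1, z_2 ∈ ℝ^d and h_1, h_2 ∈ ℝ^d: ⟨DΦ(z_1) h_1, DΦ(z_2) h_2⟩_W = ∂_1∂_2 K_W(z_1,z_2)·(h_1, h_2), where ∂_1∂_2 K_W(z_1,z_2) denotes the mixed second derivative of K_W, a bilinear form on ℝ^d × ℝ^d. -/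
open scoped RealInnerProductSpace

open Filter Set Topology

noncomputable section

/-- The mixed second derivative `∂₁∂₂ K_W(z₁,z₂)·(h₁,h₂)`. -/
def mixedDeriv {d : ℕ} (KW : EuclideanSpace ℝ (Fin d) → EuclideanSpace ℝ (Fin d) → ℝ)
    (z1 z2 h1 h2 : EuclideanSpace ℝ (Fin d)) : ℝ :=
  fderiv ℝ (fun w => (fderiv ℝ (fun z => KW z w) z1) h1) z2 h2

namespace Stmt12Aux

lemma key_est {E : Type*} [NormedAddCommGroup E] [NormedSpace ℝ E]
    (F : E × E → ℝ) (hF : ContDiff ℝ 2 F) (z1 z2 : E) {ε : ℝ} (hε : 0 < ε) :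
    ∃ δ > 0, ∀ v w : E, ‖v‖ ≤ δ → ‖w‖ ≤ δ →
      |(F (z1+v, z2+w) - F (z1+v, z2) - F (z1, z2+w) + F (z1, z2))
        - fderiv ℝ (fderiv ℝ F) (z1, z2) (v, 0) (0, w)| ≤ ε * (‖v‖ * ‖w‖) := by
  have hdF : Differentiable ℝ F := hF.differentiable (by norm_num)
  have hf'cd : ContDiff ℝ 1 (fderiv ℝ F) := hF.fderiv_right (by norm_num)
  have hdf' : Differentiable ℝ (fderiv ℝ F) := hf'cd.differentiable one_ne_zero
  have hcont : Continuous (fderiv ℝ (fderiv ℝ F)) := hf'cd.continuous_fderiv one_ne_zero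
  set f'' := fderiv ℝ (fderiv ℝ F) with hf''def
  have h0 : Tendsto (fun p => ‖f'' p - f'' (z1,z2)‖) (𝓝 (z1,z2)) (𝓝 0) := by
    have h1 : Tendsto (fun p => f'' p - f'' (z1,z2)) (𝓝 (z1,z2)) (𝓝 0) := by
      exact tendsto_sub_nhds_zero_iff.2 (hcont.tendsto (z1,z2))
    exact (tendsto_iff_norm_sub_tendsto_zero (E := E × E →L[ℝ] E × E →L[ℝ] ℝ)).1 (hcont.tendsto (z1,z2))
  have hev : ∀ᶠ p in 𝓝 (z1,z2), ‖f'' p - f'' (z1,z2)‖ < ε := h0.eventually (gt_mem_nhds hε)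
  obtain ⟨δ, hδpos, hδ⟩ := Metric.eventually_nhds_iff.mp hev
  refine ⟨δ/2, by positivity, ?_⟩
  intro v w hv hw
  set c := f'' (z1,z2) (v,0) (0,w) with hcdef
  have hclose : ∀ s t : ℝ, s ∈ Icc (0:ℝ) 1 → t ∈ Icc (0:ℝ) 1 →
      ‖f'' (z1 + s•v, z2 + t•w) - f'' (z1,z2)‖ ≤ ε := by
    intro s t hs ht
    refine le_of_lt (hδ ?_)
    rw [Prod.dist_eq]
    dsimp only
    have h1 : dist (z1 + s•v) z1 = ‖s•v‖ := by simp [dist_eq_norm]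
    have h2 : dist (z2 + t•w) z2 = ‖t•w‖ := by simp [dist_eq_norm]
    have hs1 : ‖s•v‖ ≤ δ/2 := by
      rw [norm_smul]
      calc ‖s‖ * ‖v‖ ≤ 1 * (δ/2) := by
            apply mul_le_mul _ hv (norm_nonneg _) zero_le_one
            rw [Real.norm_eq_abs, abs_of_nonneg hs.1]; exact hs.2
        _ = δ/2 := one_mul _
    have ht1 : ‖t•w‖ ≤ δ/2 := by
      rw [norm_smul]
      calc ‖t‖ * ‖w‖ ≤ 1 * (δ/2) := by
            apply mul_le_mul _ hw (norm_nonneg _) zero_le_one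
            rw [Real.norm_eq_abs, abs_of_nonneg ht.1]; exact ht.2
        _ = δ/2 := one_mul _
    rw [h1, h2]
    exact lt_of_le_of_lt (max_le hs1 ht1) (by linarith)
  have hbound : ∀ s t : ℝ, s ∈ Icc (0:ℝ) 1 → t ∈ Icc (0:ℝ) 1 →
      ‖f'' (z1 + s•v, z2 + t•w) (v,0) (0,w) - c‖ ≤ ε * (‖v‖ * ‖w‖) := by
    intro s t hs ht
    have : f'' (z1 + s•v, z2 + t•w) (v,0) (0,w) - c
        = (f'' (z1 + s•v, z2 + t•w) - f'' (z1,z2)) (v,0) (0,w) := by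
      simp [hcdef, ContinuousLinearMap.sub_apply]
    rw [this]
    calc ‖(f'' (z1 + s•v, z2 + t•w) - f'' (z1,z2)) (v,0) (0,w)‖
        ≤ ‖f'' (z1 + s•v, z2 + t•w) - f'' (z1,z2)‖ * ‖((v,0) : E × E)‖ * ‖((0,w) : E × E)‖ :=
          ContinuousLinearMap.le_opNorm₂ _ _ _
      _ ≤ ε * (‖v‖ * ‖w‖) := by
          have e1 : ‖((v,0) : E × E)‖ = ‖v‖ := by simp [Prod.norm_def]
          have e2 : ‖((0,w) : E × E)‖ = ‖w‖ := by simp [Prod.norm_def]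
          rw [e1, e2, mul_assoc]
          apply mul_le_mul_of_nonneg_right (hclose s t hs ht) (by positivity)
  have Hcl : ∀ t ∈ Icc (0:ℝ) 1,
      ‖fderiv ℝ F (z1+v, z2+t•w) (0,w) - fderiv ℝ F (z1, z2+t•w) (0,w) - c‖
        ≤ ε * (‖v‖*‖w‖) := by
    intro t ht
    set p := z2 + t•w with hpdef
    set Hf : ℝ → ℝ := fun s => fderiv ℝ F (z1+s•v, p) (0,w) - s * c with hHf
    have hder : ∀ s ∈ Icc (0:ℝ) 1, HasDerivWithinAt Hf
        (f'' (z1+s•v, p) (v,0) (0,w) - c) (Icc (0:ℝ) 1) s := by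
      intro s _
      have h1 : HasDerivAt (fun s : ℝ => z1 + s•v) v s := by
        simpa using ((hasDerivAt_id s).smul_const v).const_add z1
      have hcurve : HasDerivAt (fun s : ℝ => ((z1 + s•v, p) : E × E)) ((v, 0) : E × E) s :=
        h1.prodMk (hasDerivAt_const s p)
      have h2 : HasFDerivAt (fderiv ℝ F) (f'' (z1+s•v,p)) (z1+s•v,p) :=
        (hdf' _).hasFDerivAt
      have h3 : HasDerivAt (fun s : ℝ => fderiv ℝ F (z1+s•v,p)) (f'' (z1+s•v,p) (v,0)) s := by
        simpa [Function.comp_def] using h2.comp_hasDerivAt s hcurve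
      have h4 : HasDerivAt (fun s : ℝ => fderiv ℝ F (z1+s•v,p) (0,w))
          (f'' (z1+s•v,p) (v,0) (0,w)) s := by
        simpa [Function.comp_def] using
          (ContinuousLinearMap.apply ℝ ℝ (((0:E), w) : E × E)).hasFDerivAt.comp_hasDerivAt s h3
      have h5 : HasDerivAt (fun x : ℝ => x * c) c s := by simpa using (hasDerivAt_id s).mul_const c
      exact (h4.sub h5).hasDerivWithinAt
    have hmvt := Convex.norm_image_sub_le_of_norm_hasDerivWithin_le hder
      (fun s hs => hbound s t hs ht) (convex_Icc 0 1)
      (left_mem_Icc.2 zero_le_one) (right_mem_Icc.2 zero_le_one)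
    have : Hf 1 - Hf 0 = fderiv ℝ F (z1+v, p) (0,w) - fderiv ℝ F (z1, p) (0,w) - c := by
      simp [hHf]
      ring
    rw [this] at hmvt
    simpa using hmvt
  set Gf : ℝ → ℝ := fun t => F (z1+v, z2+t•w) - F (z1, z2+t•w) - t * c with hGf
  have hGder : ∀ t ∈ Icc (0:ℝ) 1, HasDerivWithinAt Gf
      (fderiv ℝ F (z1+v, z2+t•w) (0,w) - fderiv ℝ F (z1, z2+t•w) (0,w) - c)
      (Icc (0:ℝ) 1) t := by
    intro t _
    have h1 : HasDerivAt (fun t : ℝ => z2 + t•w) w t := by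
      simpa using ((hasDerivAt_id t).smul_const w).const_add z2
    have hc1 : HasDerivAt (fun t : ℝ => ((z1+v, z2+t•w) : E × E)) ((0, w) : E × E) t :=
      (hasDerivAt_const t (z1+v)).prodMk h1
    have hc2 : HasDerivAt (fun t : ℝ => ((z1, z2+t•w) : E × E)) ((0, w) : E × E) t :=
      (hasDerivAt_const t z1).prodMk h1
    have hF1 : HasDerivAt (fun t : ℝ => F (z1+v, z2+t•w))
        (fderiv ℝ F (z1+v, z2+t•w) (0,w)) t := by
      simpa [Function.comp_def] using (hdF _).hasFDerivAt.comp_hasDerivAt t hc1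
    have hF2 : HasDerivAt (fun t : ℝ => F (z1, z2+t•w))
        (fderiv ℝ F (z1, z2+t•w) (0,w)) t := by
      simpa [Function.comp_def] using (hdF _).hasFDerivAt.comp_hasDerivAt t hc2
    have h5 : HasDerivAt (fun x : ℝ => x * c) c t := by simpa using (hasDerivAt_id t).mul_const c
    exact ((hF1.sub hF2).sub h5).hasDerivWithinAt
  have hmvt := Convex.norm_image_sub_le_of_norm_hasDerivWithin_le hGder
    (fun t ht => Hcl t ht) (convex_Icc 0 1)
    (left_mem_Icc.2 zero_le_one) (right_mem_Icc.2 zero_le_one)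
  have heq : Gf 1 - Gf 0 = (F (z1+v, z2+w) - F (z1+v, z2) - F (z1, z2+w) + F (z1, z2)) - c := by
    simp [hGf]
    ring
  rw [heq] at hmvt
  simpa [Real.norm_eq_abs] using hmvt

lemma mixedDeriv_eq' {E : Type*} [NormedAddCommGroup E] [NormedSpace ℝ E]
    (F : E × E → ℝ) (hF : ContDiff ℝ 2 F) (z1 z2 h1 h2 : E) :
    fderiv ℝ (fun w => (fderiv ℝ (fun z => F (z, w)) z1) h1) z2 h2
      = fderiv ℝ (fderiv ℝ F) (z1, z2) (h1, 0) (0, h2) := by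
  have hdF : Differentiable ℝ F := hF.differentiable (by norm_num)
  have hf'cd : ContDiff ℝ 1 (fderiv ℝ F) := hF.fderiv_right (by norm_num)
  have hdf' : Differentiable ℝ (fderiv ℝ F) := hf'cd.differentiable one_ne_zero
  have inner_eq : ∀ w : E, fderiv ℝ (fun z => F (z, w)) z1
      = (fderiv ℝ F (z1, w)).comp (ContinuousLinearMap.inl ℝ E E) := by
    intro w
    have h : HasFDerivAt (fun z : E => F (z, w))
        ((fderiv ℝ F (z1, w)).comp (ContinuousLinearMap.inl ℝ E E)) z1 :=
      (hdF (z1,w)).hasFDerivAt.comp z1 (hasFDerivAt_prodMk_left z1 w)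
    exact h.fderiv
  have hfun : (fun w : E => (fderiv ℝ (fun z => F (z, w)) z1) h1)
      = fun w : E => fderiv ℝ F (z1, w) ((h1, 0) : E × E) := by
    funext w
    rw [inner_eq w]
    simp
  have houter : HasFDerivAt (fun w : E => fderiv ℝ F (z1, w) ((h1, 0) : E × E))
      (((ContinuousLinearMap.apply ℝ ℝ (((h1:E), (0:E)) : E × E)).comp
        (fderiv ℝ (fderiv ℝ F) (z1, z2))).comp (ContinuousLinearMap.inr ℝ E E)) z2 := by
    have h2 : HasFDerivAt (fderiv ℝ F) (fderiv ℝ (fderiv ℝ F) (z1,z2)) (z1,z2) :=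
      (hdf' _).hasFDerivAt
    have h3 := h2.comp z2 (hasFDerivAt_prodMk_right z1 z2)
    exact (ContinuousLinearMap.apply ℝ ℝ (((h1:E), (0:E)) : E × E)).hasFDerivAt.comp z2 h3
  have hsymm : ∀ v w : E × E,
      fderiv ℝ (fderiv ℝ F) (z1, z2) v w = fderiv ℝ (fderiv ℝ F) (z1, z2) w v :=
    second_derivative_symmetric (fun y => (hdF y).hasFDerivAt) ((hdf' _).hasFDerivAt)
  calc fderiv ℝ (fun w => (fderiv ℝ (fun z => F (z, w)) z1) h1) z2 h2
      = fderiv ℝ (fun w : E => fderiv ℝ F (z1, w) ((h1, 0) : E × E)) z2 h2 := by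
        rw [hfun]
    _ = fderiv ℝ (fderiv ℝ F) (z1, z2) ((0, h2) : E × E) ((h1, 0) : E × E) := by
        rw [houter.fderiv]; simp
    _ = fderiv ℝ (fderiv ℝ F) (z1, z2) (h1, 0) (0, h2) := hsymm _ _

variable {d : ℕ}

/-- The bilinear mixed second derivative, expressed via the joint function. -/
def Bq (KW : EuclideanSpace ℝ (Fin d) → EuclideanSpace ℝ (Fin d) → ℝ)
    (z1 z2 h1 h2 : EuclideanSpace ℝ (Fin d)) : ℝ :=
  fderiv ℝ (fderiv ℝ (fun zz : EuclideanSpace ℝ (Fin d) × EuclideanSpace ℝ (Fin d) =>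
    KW zz.1 zz.2)) (z1, z2) (h1, 0) (0, h2)

lemma Bq_smul1 (KW : EuclideanSpace ℝ (Fin d) → EuclideanSpace ℝ (Fin d) → ℝ)
    (z1 z2 h1 h2 : EuclideanSpace ℝ (Fin d)) (a : ℝ) :
    Bq KW z1 z2 (a • h1) h2 = a * Bq KW z1 z2 h1 h2 := by
  unfold Bq
  have h : ((a • h1, (0 : EuclideanSpace ℝ (Fin d))) :
      EuclideanSpace ℝ (Fin d) × EuclideanSpace ℝ (Fin d)) = a • ((h1, 0)) := by
    simp [Prod.smul_mk]
  rw [h, map_smul, ContinuousLinearMap.smul_apply, smul_eq_mul]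

lemma Bq_smul2 (KW : EuclideanSpace ℝ (Fin d) → EuclideanSpace ℝ (Fin d) → ℝ)
    (z1 z2 h1 h2 : EuclideanSpace ℝ (Fin d)) (a : ℝ) :
    Bq KW z1 z2 h1 (a • h2) = a * Bq KW z1 z2 h1 h2 := by
  unfold Bq
  have h : (((0 : EuclideanSpace ℝ (Fin d)), a • h2) :
      EuclideanSpace ℝ (Fin d) × EuclideanSpace ℝ (Fin d)) = a • ((0, h2)) := by
    simp [Prod.smul_mk]
  rw [h, map_smul, smul_eq_mul]

lemma Bq_add1 (KW : EuclideanSpace ℝ (Fin d) → EuclideanSpace ℝ (Fin d) → ℝ)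
    (z1 z2 h1 h1' h2 : EuclideanSpace ℝ (Fin d)) :
    Bq KW z1 z2 (h1 + h1') h2 = Bq KW z1 z2 h1 h2 + Bq KW z1 z2 h1' h2 := by
  unfold Bq
  have h : ((h1 + h1', (0 : EuclideanSpace ℝ (Fin d))) :
      EuclideanSpace ℝ (Fin d) × EuclideanSpace ℝ (Fin d)) = (h1, 0) + (h1', 0) := by
    simp [Prod.mk_add_mk]
  rw [h, map_add, ContinuousLinearMap.add_apply]

lemma Bq_add2 (KW : EuclideanSpace ℝ (Fin d) → EuclideanSpace ℝ (Fin d) → ℝ)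
    (z1 z2 h1 h2 h2' : EuclideanSpace ℝ (Fin d)) :
    Bq KW z1 z2 h1 (h2 + h2') = Bq KW z1 z2 h1 h2 + Bq KW z1 z2 h1 h2' := by
  unfold Bq
  have h : (((0 : EuclideanSpace ℝ (Fin d)), h2 + h2') :
      EuclideanSpace ℝ (Fin d) × EuclideanSpace ℝ (Fin d)) = (0, h2) + (0, h2') := by
    simp [Prod.mk_add_mk]
  rw [h, map_add]

section WithPhi

variable {W : Type*} [NormedAddCommGroup W] [InnerProductSpace ℝ W]
  (KW : EuclideanSpace ℝ (Fin d) → EuclideanSpace ℝ (Fin d) → ℝ)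
  (Φ : EuclideanSpace ℝ (Fin d) → W)

/-- Difference-quotient sequence. -/
def seqU (z h : EuclideanSpace ℝ (Fin d)) (n : ℕ) : W :=
  ((n : ℝ) + 1) • (Φ (z + ((n : ℝ) + 1)⁻¹ • h) - Φ z)

variable (hKW : ContDiff ℝ 2 (fun zz : EuclideanSpace ℝ (Fin d) × EuclideanSpace ℝ (Fin d) =>
      KW zz.1 zz.2))
  (hΦ : ∀ z1 z2 : EuclideanSpace ℝ (Fin d), ⟪Φ z1, Φ z2⟫ = KW z1 z2)

include hKW hΦ in
/-- Uniform second-order estimate in terms of the feature map. -/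
lemma key_est' (z1 z2 : EuclideanSpace ℝ (Fin d)) {ε : ℝ} (hε : 0 < ε) :
    ∃ δ > 0, ∀ v w : EuclideanSpace ℝ (Fin d), ‖v‖ ≤ δ → ‖w‖ ≤ δ →
      |⟪Φ (z1 + v) - Φ z1, Φ (z2 + w) - Φ z2⟫ - Bq KW z1 z2 v w| ≤ ε * (‖v‖ * ‖w‖) := by
  obtain ⟨δ, hδpos, hδ⟩ := key_est (fun zz : EuclideanSpace ℝ (Fin d) ×
    EuclideanSpace ℝ (Fin d) => KW zz.1 zz.2) hKW z1 z2 hε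
  refine ⟨δ, hδpos, fun v w hv hw => ?_⟩
  have h := hδ v w hv hw
  have hexp : ⟪Φ (z1 + v) - Φ z1, Φ (z2 + w) - Φ z2⟫
      = KW (z1+v) (z2+w) - KW (z1+v) z2 - KW z1 (z2+w) + KW z1 z2 := by
    rw [inner_sub_left, inner_sub_right, inner_sub_right, hΦ, hΦ, hΦ, hΦ]
    ring
  rw [hexp]
  simpa [Bq] using h

include hKW hΦ in
lemma inner_u_close (z1 z2 h1 h2 : EuclideanSpace ℝ (Fin d)) {ε : ℝ} (hε : 0 < ε) :
    ∃ N : ℕ, ∀ m ≥ N, ∀ n ≥ N,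
      |⟪seqU Φ z1 h1 m, seqU Φ z2 h2 n⟫ - Bq KW z1 z2 h1 h2| ≤ ε * (‖h1‖ * ‖h2‖) := by
  obtain ⟨δ, hδpos, hδ⟩ := key_est' KW Φ hKW hΦ z1 z2 hε
  obtain ⟨N, hN⟩ := exists_nat_ge ((‖h1‖ + ‖h2‖) / δ)
  refine ⟨N, fun m hm n hn => ?_⟩
  set a : ℝ := (m : ℝ) + 1 with ha
  set b : ℝ := (n : ℝ) + 1 with hb
  have hapos : (0:ℝ) < a := by positivity
  have hbpos : (0:ℝ) < b := by positivity
  have hNa : (‖h1‖ + ‖h2‖) / δ ≤ a := by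
    calc (‖h1‖ + ‖h2‖) / δ ≤ (N:ℝ) := hN
      _ ≤ (m:ℝ) := Nat.cast_le.2 hm
      _ ≤ a := by rw [ha]; linarith
  have hNb : (‖h1‖ + ‖h2‖) / δ ≤ b := by
    calc (‖h1‖ + ‖h2‖) / δ ≤ (N:ℝ) := hN
      _ ≤ (n:ℝ) := Nat.cast_le.2 hn
      _ ≤ b := by rw [hb]; linarith
  have hv : ‖a⁻¹ • h1‖ ≤ δ := by
    rw [norm_smul, Real.norm_eq_abs, abs_of_pos (inv_pos.2 hapos)]
    rw [div_le_iff₀ hδpos] at hNa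
    have h1' : ‖h1‖ ≤ a * δ := le_trans (by simp [norm_nonneg, le_add_iff_nonneg_right,
      norm_nonneg h2] : ‖h1‖ ≤ ‖h1‖ + ‖h2‖) hNa
    rw [inv_mul_le_iff₀ hapos]  -- a⁻¹ * ‖h1‖ ≤ δ ↔ ...
    linarith [h1']
  have hw : ‖b⁻¹ • h2‖ ≤ δ := by
    rw [norm_smul, Real.norm_eq_abs, abs_of_pos (inv_pos.2 hbpos)]
    rw [div_le_iff₀ hδpos] at hNb
    have h2' : ‖h2‖ ≤ b * δ := le_trans (by simp [norm_nonneg, le_add_iff_nonneg_left,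
      norm_nonneg h1] : ‖h2‖ ≤ ‖h1‖ + ‖h2‖) hNb
    rw [inv_mul_le_iff₀ hbpos]
    linarith [h2']
  have hkey := hδ (a⁻¹ • h1) (b⁻¹ • h2) hv hw
  have hBsm : Bq KW z1 z2 (a⁻¹ • h1) (b⁻¹ • h2) = a⁻¹ * (b⁻¹ * Bq KW z1 z2 h1 h2) := by
    rw [Bq_smul1, Bq_smul2]
  have hnv : ‖a⁻¹ • h1‖ = a⁻¹ * ‖h1‖ := by
    rw [norm_smul, Real.norm_eq_abs, abs_of_pos (inv_pos.2 hapos)]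
  have hnw : ‖b⁻¹ • h2‖ = b⁻¹ * ‖h2‖ := by
    rw [norm_smul, Real.norm_eq_abs, abs_of_pos (inv_pos.2 hbpos)]
  rw [hBsm, hnv, hnw] at hkey
  set x : ℝ := ⟪Φ (z1 + a⁻¹ • h1) - Φ z1, Φ (z2 + b⁻¹ • h2) - Φ z2⟫ with hx
  have huu : ⟪seqU Φ z1 h1 m, seqU Φ z2 h2 n⟫ = a * b * x := by
    rw [seqU, seqU, real_inner_smul_left, real_inner_smul_right, ← ha, ← hb, hx]
    ring
  set B0 : ℝ := Bq KW z1 z2 h1 h2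
  have e1 : a * b * x - B0 = (a*b) * (x - a⁻¹ * (b⁻¹ * B0)) := by
    field_simp
  rw [huu, e1, abs_mul, abs_of_pos (mul_pos hapos hbpos)]
  calc (a*b) * |x - a⁻¹ * (b⁻¹ * B0)|
      ≤ (a*b) * (ε * (a⁻¹ * ‖h1‖ * (b⁻¹ * ‖h2‖))) :=
        mul_le_mul_of_nonneg_left hkey (mul_pos hapos hbpos).le
    _ = ε * (‖h1‖ * ‖h2‖) := by
        field_simp

end WithPhi

end Stmt12Aux

open Stmt12Aux

/-- differentiability of the kernel feature map, with the Gram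
identity for its differential. -/
theorem stmt12 (W : Type*) [NormedAddCommGroup W] [InnerProductSpace ℝ W]
    [CompleteSpace W] (d : ℕ) (hd : 1 ≤ d)
    (KW : EuclideanSpace ℝ (Fin d) → EuclideanSpace ℝ (Fin d) → ℝ)
    (hKW : ContDiff ℝ 2 (fun zz : EuclideanSpace ℝ (Fin d) × EuclideanSpace ℝ (Fin d) =>
      KW zz.1 zz.2))
    (Φ : EuclideanSpace ℝ (Fin d) → W)
    (hΦ : ∀ z1 z2 : EuclideanSpace ℝ (Fin d), ⟪Φ z1, Φ z2⟫ = KW z1 z2) :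
    (∀ z : EuclideanSpace ℝ (Fin d), DifferentiableAt ℝ Φ z) ∧
    (∀ z1 z2 h1 h2 : EuclideanSpace ℝ (Fin d),
      ⟪fderiv ℝ Φ z1 h1, fderiv ℝ Φ z2 h2⟫ = mixedDeriv KW z1 z2 h1 h2) := by
  classical
  -- the difference-quotient sequences are Cauchy
  have hcauchy : ∀ z h : EuclideanSpace ℝ (Fin d), CauchySeq (seqU Φ z h) := by
    intro z h
    rw [Metric.cauchySeq_iff]
    intro ε hε
    have hε' : 0 < ε^2/(4*(‖h‖^2+1)) := by positivity
    obtain ⟨N, hN⟩ := inner_u_close KW Φ hKW hΦ z z h h hε'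
    refine ⟨N, fun m hm n hn => ?_⟩
    have e1 := abs_le.mp (hN m hm m hm)
    have e2 := abs_le.mp (hN m hm n hn)
    have e3 := abs_le.mp (hN n hn n hn)
    have hdist : dist (seqU Φ z h m) (seqU Φ z h n) ^ 2
        = ⟪seqU Φ z h m, seqU Φ z h m⟫ - 2*⟪seqU Φ z h m, seqU Φ z h n⟫
          + ⟪seqU Φ z h n, seqU Φ z h n⟫ := by
      rw [dist_eq_norm, ← real_inner_self_eq_norm_sq, inner_sub_left, inner_sub_right,
        inner_sub_right, real_inner_comm (seqU Φ z h n) (seqU Φ z h m)]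
      ring
    have hb : dist (seqU Φ z h m) (seqU Φ z h n) ^ 2
        ≤ 4*((ε^2/(4*(‖h‖^2+1)))*(‖h‖*‖h‖)) := by
      rw [hdist]; linarith [e1.1, e1.2, e2.1, e2.2, e3.1, e3.2]
    have hlt : 4*((ε^2/(4*(‖h‖^2+1)))*(‖h‖*‖h‖)) < ε^2 := by
      have hX : ‖h‖*‖h‖ = ‖h‖^2 := (sq ‖h‖).symm
      have hpos : (0:ℝ) < ‖h‖^2+1 := by positivity
      have he : 4*((ε^2/(4*(‖h‖^2+1)))*(‖h‖^2)) = ε^2 * (‖h‖^2/(‖h‖^2+1)) := by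
        field_simp
      rw [hX, he]
      have hq : ‖h‖^2/(‖h‖^2+1) < 1 := by
        rw [div_lt_one hpos]; linarith
      calc ε^2 * (‖h‖^2/(‖h‖^2+1)) < ε^2 * 1 :=
            mul_lt_mul_of_pos_left hq (by positivity)
        _ = ε^2 := mul_one _
    have hd2 : dist (seqU Φ z h m) (seqU Φ z h n) ^ 2 < ε^2 := lt_of_le_of_lt hb hlt
    nlinarith [dist_nonneg (x := seqU Φ z h m) (y := seqU Φ z h n), hε]
  have hex : ∀ z h : EuclideanSpace ℝ (Fin d), ∃ l : W, Tendsto (seqU Φ z h) atTop (𝓝 l) :=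
    fun z h => cauchySeq_tendsto_of_complete (hcauchy z h)
  choose D hD using hex
  -- Gram identity for D
  have gram : ∀ z1 z2 h1 h2 : EuclideanSpace ℝ (Fin d),
      ⟪D z1 h1, D z2 h2⟫ = Bq KW z1 z2 h1 h2 := by
    intro z1 z2 h1 h2
    have habs : ∀ ε : ℝ, 0 < ε →
        |⟪D z1 h1, D z2 h2⟫ - Bq KW z1 z2 h1 h2| ≤ ε * (‖h1‖ * ‖h2‖) := by
      intro ε hε
      obtain ⟨N, hN⟩ := inner_u_close KW Φ hKW hΦ z1 z2 h1 h2 hε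
      have step1 : ∀ m, N ≤ m →
          |⟪seqU Φ z1 h1 m, D z2 h2⟫ - Bq KW z1 z2 h1 h2| ≤ ε * (‖h1‖ * ‖h2‖) := by
        intro m hm
        have t1 : Tendsto (fun n => |⟪seqU Φ z1 h1 m, seqU Φ z2 h2 n⟫ - Bq KW z1 z2 h1 h2|)
            atTop (𝓝 |⟪seqU Φ z1 h1 m, D z2 h2⟫ - Bq KW z1 z2 h1 h2|) :=
          ((tendsto_const_nhds.inner (hD z2 h2)).sub tendsto_const_nhds).abs
        exact le_of_tendsto t1 (eventually_atTop.2 ⟨N, fun n hn => hN m hm n hn⟩)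
      have t2 : Tendsto (fun m => |⟪seqU Φ z1 h1 m, D z2 h2⟫ - Bq KW z1 z2 h1 h2|)
          atTop (𝓝 |⟪D z1 h1, D z2 h2⟫ - Bq KW z1 z2 h1 h2|) :=
        (((hD z1 h1).inner tendsto_const_nhds).sub tendsto_const_nhds).abs
      exact le_of_tendsto t2 (eventually_atTop.2 ⟨N, step1⟩)
    by_contra hne
    have h0 : 0 < |⟪D z1 h1, D z2 h2⟫ - Bq KW z1 z2 h1 h2| :=
      abs_pos.2 (sub_ne_zero.2 hne)
    set x := |⟪D z1 h1, D z2 h2⟫ - Bq KW z1 z2 h1 h2| with hxdef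
    set M := ‖h1‖ * ‖h2‖ with hM
    have hM0 : 0 ≤ M := by positivity
    have hx := habs (x/(2*(M+1))) (by positivity)
    have hfin : x * (2*(M+1)) ≤ x * M := by
      have h2 := mul_le_mul_of_nonneg_right hx
        (le_of_lt (show (0:ℝ) < 2*(M+1) by positivity))
      calc x * (2*(M+1)) ≤ (x/(2*(M+1)) * M) * (2*(M+1)) := h2
        _ = x * M := by field_simp
    nlinarith [h0, hM0, hfin]
  -- linearity of D in the direction
  have Dadd : ∀ (z h1 h2 : EuclideanSpace ℝ (Fin d)), D z (h1+h2) = D z h1 + D z h2 := by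
    intro z h1 h2
    have hz : ⟪D z (h1+h2) - (D z h1 + D z h2), D z (h1+h2) - (D z h1 + D z h2)⟫ = 0 := by
      simp only [inner_sub_left, inner_sub_right, inner_add_left, inner_add_right, gram,
        Bq_add1, Bq_add2]
      ring
    exact sub_eq_zero.mp (inner_self_eq_zero.mp hz)
  have Dsmul : ∀ (z : EuclideanSpace ℝ (Fin d)) (a : ℝ) (h : EuclideanSpace ℝ (Fin d)),
      D z (a • h) = a • D z h := by
    intro z a h
    have hz : ⟪D z (a • h) - a • D z h, D z (a • h) - a • D z h⟫ = 0 := by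
      simp only [inner_sub_left, inner_sub_right, real_inner_smul_left,
        real_inner_smul_right, gram, Bq_smul1, Bq_smul2]
      ring
    exact sub_eq_zero.mp (inner_self_eq_zero.mp hz)
  -- differentiability
  have main : ∀ z : EuclideanSpace ℝ (Fin d), ∃ L : EuclideanSpace ℝ (Fin d) →L[ℝ] W,
      (∀ h, L h = D z h) ∧ HasFDerivAt Φ L z := by
    intro z
    refine ⟨LinearMap.toContinuousLinearMap
      { toFun := D z, map_add' := Dadd z,
        map_smul' := fun a h => by simpa using Dsmul z a h }, fun h => rfl, ?_⟩
    rw [hasFDerivAt_iff_isLittleO_nhds_zero, Asymptotics.isLittleO_iff]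
    intro c hc
    have hη : (0:ℝ) < c^2/4 := by positivity
    obtain ⟨δ, hδpos, hδ⟩ := key_est' KW Φ hKW hΦ z z hη
    filter_upwards [Metric.ball_mem_nhds (0 : EuclideanSpace ℝ (Fin d)) hδpos] with h hh
    rw [mem_ball_zero_iff] at hh
    have hL : (LinearMap.toContinuousLinearMap
      { toFun := D z, map_add' := Dadd z,
        map_smul' := fun a h => by simpa using Dsmul z a h :
          EuclideanSpace ℝ (Fin d) →ₗ[ℝ] W }) h = D z h := rfl
    rw [hL]
    have hT1 : |⟪Φ (z + h) - Φ z, Φ (z + h) - Φ z⟫ - Bq KW z z h h|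
        ≤ (c^2/4) * (‖h‖ * ‖h‖) := hδ h h hh.le hh.le
    have hT3 : ⟪D z h, D z h⟫ = Bq KW z z h h := gram z z h h
    have hT2 : |⟪Φ (z + h) - Φ z, D z h⟫ - Bq KW z z h h| ≤ (c^2/4) * (‖h‖ * ‖h‖) := by
      have t1 : Tendsto (fun n => |⟪Φ (z + h) - Φ z, seqU Φ z h n⟫ - Bq KW z z h h|)
          atTop (𝓝 |⟪Φ (z + h) - Φ z, D z h⟫ - Bq KW z z h h|) :=
        ((tendsto_const_nhds.inner (hD z h)).sub tendsto_const_nhds).abs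
      refine le_of_tendsto t1 (Eventually.of_forall fun n => ?_)
      set b : ℝ := (n:ℝ) + 1 with hbdef
      have hbpos : (0:ℝ) < b := by positivity
      have hb1 : (1:ℝ) ≤ b := by
        rw [hbdef]
        have : (0:ℝ) ≤ (n:ℝ) := Nat.cast_nonneg n
        linarith
      have hwn : ‖b⁻¹ • h‖ ≤ δ := by
        rw [norm_smul, Real.norm_eq_abs, abs_of_pos (inv_pos.2 hbpos)]
        have hinv : b⁻¹ ≤ 1 := inv_le_one_of_one_le₀ hb1
        calc b⁻¹ * ‖h‖ ≤ 1 * ‖h‖ :=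
              mul_le_mul_of_nonneg_right hinv (norm_nonneg h)
          _ = ‖h‖ := one_mul _
          _ ≤ δ := hh.le
      have hk := hδ h (b⁻¹ • h) hh.le hwn
      have hBs : Bq KW z z h (b⁻¹ • h) = b⁻¹ * Bq KW z z h h := Bq_smul2 KW z z h h b⁻¹
      have hns : ‖b⁻¹ • h‖ = b⁻¹ * ‖h‖ := by
        rw [norm_smul, Real.norm_eq_abs, abs_of_pos (inv_pos.2 hbpos)]
      rw [hBs, hns] at hk
      have hseq : ⟪Φ (z + h) - Φ z, seqU Φ z h n⟫
          = b * ⟪Φ (z + h) - Φ z, Φ (z + b⁻¹ • h) - Φ z⟫ := by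
        rw [seqU, real_inner_smul_right]
      rw [hseq]
      have e1 : b * ⟪Φ (z + h) - Φ z, Φ (z + b⁻¹ • h) - Φ z⟫ - Bq KW z z h h
          = b * (⟪Φ (z + h) - Φ z, Φ (z + b⁻¹ • h) - Φ z⟫ - b⁻¹ * Bq KW z z h h) := by
        field_simp
      rw [e1, abs_mul, abs_of_pos hbpos]
      calc b * |⟪Φ (z + h) - Φ z, Φ (z + b⁻¹ • h) - Φ z⟫ - b⁻¹ * Bq KW z z h h|
          ≤ b * ((c^2/4) * (‖h‖ * (b⁻¹ * ‖h‖))) :=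
            mul_le_mul_of_nonneg_left hk hbpos.le
        _ = (c^2/4) * (‖h‖ * ‖h‖) := by field_simp
    have hr : ‖Φ (z + h) - Φ z - D z h‖^2
        = ⟪Φ (z + h) - Φ z, Φ (z + h) - Φ z⟫ - 2*⟪Φ (z + h) - Φ z, D z h⟫
          + ⟪D z h, D z h⟫ := by
      rw [norm_sub_sq_real, ← real_inner_self_eq_norm_sq, ← real_inner_self_eq_norm_sq]
    have e2 := abs_le.mp hT1
    have e3 := abs_le.mp hT2
    have hsq : ‖Φ (z + h) - Φ z - D z h‖^2 ≤ 3*((c^2/4)*(‖h‖*‖h‖)) := by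
      rw [hr, hT3]; linarith [e2.1, e2.2, e3.1, e3.2]
    have hq : (0:ℝ) ≤ c * ‖h‖ := mul_nonneg hc.le (norm_nonneg h)
    have h34 : ‖Φ (z + h) - Φ z - D z h‖^2 ≤ (c * ‖h‖)^2 := by
      nlinarith [hsq, mul_nonneg (mul_nonneg hc.le hc.le) (mul_nonneg (norm_nonneg h) (norm_nonneg h))]
    have := Real.sqrt_le_sqrt h34
    rwa [Real.sqrt_sq (norm_nonneg _), Real.sqrt_sq hq] at this
  refine ⟨fun z => (main z).choose_spec.2.differentiableAt, fun z1 z2 h1 h2 => ?_⟩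
  obtain ⟨L1, hL1e, hL1⟩ := main z1
  obtain ⟨L2, hL2e, hL2⟩ := main z2
  rw [hL1.fderiv, hL2.fderiv, hL1e, hL2e, gram]
  exact (mixedDeriv_eq' (fun zz : EuclideanSpace ℝ (Fin d) ×
    EuclideanSpace ℝ (Fin d) => KW zz.1 zz.2) hKW z1 z2 h1 h2).symm

end
end
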